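/- Let w be a pp-irreducible string and c < d positions of w with d ≤ 𝓕_w(c). Then 𝓕_w(c) ≥ 𝓕_w(d). -/

import Mathlib

/-!
Common definitions: strings as `List α` over an alphabet `α`, 1-based positions.
-/

variable {α : Type*}

/-- The substring `w[i:j]` (1-based, inclusive; empty when `j < i`). -/
def seg (w : List α) (i j : ℕ) : List α := (w.take j).drop (i - 1)

/-- `w` has an even palindrome of radius `r` centered at position `c`:
`r ≤ c`, `c + r ≤ |w|` and `w[c−k+1] = w[c+k]` for all `1 ≤ k ≤ r`
(here expressed with 0-based list indexing: `w[c−k]? = w[c+k−1]?`). -/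
def PalAt (w : List α) (c r : ℕ) : Prop :=
  r ≤ c ∧ c + r ≤ w.length ∧ ∀ k, 1 ≤ k → k ≤ r → w[c - k]? = w[c + k - 1]?

/-- `ρ_w(c)`: the maximal even-palindrome radius at center `c`. -/
noncomputable def rho (w : List α) (c : ℕ) : ℕ := sSup {r | PalAt w c r}

/-- The reduction relation: `x y yᴿ y z → x y z` for nonempty `y`. -/
def Reduces (w w' : List α) : Prop :=
  ∃ x y z : List α, y ≠ [] ∧ w = x ++ y ++ y.reverse ++ y ++ z ∧ w' = x ++ y ++ z

/-- A string is irreducible if no reduction applies to it. -/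
def ZIrreducible (w : List α) : Prop := ∀ w', ¬ Reduces w w'

def ZReducible (w : List α) : Prop := ∃ w', Reduces w w'

/-- `w` is pp-irreducible if its longest proper prefix `w[1:|w|−1]` is irreducible. -/
def PPIrreducible (w : List α) : Prop := ZIrreducible w.dropLast

/-- `w` is ss-reducible if it is reducible and pp-irreducible. -/
def SSReducible (w : List α) : Prop := ZReducible w ∧ PPIrreducible w

/-- A Z-shape occurrence `⟨p1, p2⟩` in `w`: with `s = p2 − p1 ≥ 1`, `p1 − s ≥ 0`,
`p2 + s ≤ |w|` and `w[p1−s+1 : p2+s] = x xᴿ x` where `x = w[p1−s+1 : p1]`. -/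
def ZOcc (w : List α) (p1 p2 : ℕ) : Prop :=
  p1 < p2 ∧ p2 - p1 ≤ p1 ∧ p2 + (p2 - p1) ≤ w.length ∧
    seg w (p1 - (p2 - p1) + 1) (p2 + (p2 - p1)) =
      seg w (p1 - (p2 - p1) + 1) p1 ++ (seg w (p1 - (p2 - p1) + 1) p1).reverse ++
        seg w (p1 - (p2 - p1) + 1) p1

/-- `c ⊏_w d` : `c ≤ d − ρ_w(d) ≤ d ≤ c + ρ_w(c) ≤ d + ρ_w(d)` with `c ≠ d`
(written without truncated subtraction). -/
def Sqsub (w : List α) (c d : ℕ) : Prop :=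
  c < d ∧ c + rho w d ≤ d ∧ d ≤ c + rho w c ∧ c + rho w c ≤ d + rho w d

/-- `𝓕_w(c)`: the maximum frontier over all palindrome chains from `c`
(a palindrome chain is a nonempty list starting at `c` whose consecutive
elements are related by `⊏_w`; its frontier is `e + ρ_w(e)` for its last element `e`). -/
noncomputable def maxFrontier (w : List α) (c : ℕ) : ℕ :=
  sSup {f | ∃ l : List ℕ, l.head? = some c ∧ l.Chain' (Sqsub w) ∧
      ∃ e, l.getLast? = some e ∧ f = e + rho w e}

/-- `𝓐_w(d)`: the smallest position `c` with `c ≤ d ≤ 𝓕_w(c)`. -/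
noncomputable def originator (w : List α) (d : ℕ) : ℕ :=
  sInf {c | 1 ≤ c ∧ c ≤ d ∧ d ≤ maxFrontier w c}

/-- A position `c` of a pp-irreducible string `w` is stable if `𝓕_w(c) < |w|`. -/
def Stable (w : List α) (c : ℕ) : Prop := maxFrontier w c < w.length

/-- `c` is strongly stable if every position in `[1:c]` is stable. -/
def StronglyStable (w : List α) (c : ℕ) : Prop := ∀ e, 1 ≤ e → e ≤ c → Stable w e

/-- `T` is the output of an end-to-end walk on the path graph labeled `u`:
there are vertices `p 0 = 0, …, p |T| = |u|`, each `≤ |u|`, consecutive ones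
adjacent, and `T[i] = u[max (p (i−1)) (p i)]` (1-based; here 0-based indexing). -/
def EndToEndWalkOutput (u T : List α) : Prop :=
  ∃ p : ℕ → ℕ, p 0 = 0 ∧ p T.length = u.length ∧
    (∀ i, i ≤ T.length → p i ≤ u.length) ∧
    (∀ i, i < T.length → p (i + 1) = p i + 1 ∨ p i = p (i + 1) + 1) ∧
    (∀ i, i < T.length → T[i]? = u[max (p i) (p (i + 1)) - 1]?)

/-- `P` is accurate enough between `a` and `b`:
`min (P e) (b − e) = min (ρ_w e) (b − e)` for all `e ∈ [a:b]`. -/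
def AccEnough (w : List α) (P : ℕ → ℕ) (a b : ℕ) : Prop :=
  ∀ e, a ≤ e → e ≤ b → min (P e) (b - e) = min (rho w e) (b - e)

open Classical in
/-- `ν_w(c)`: the largest `e` with `e ⊏_w c`, or `1` if there is none. -/
noncomputable def nu (w : List α) (c : ℕ) : ℕ :=
  if ∃ e, Sqsub w e c then sSup {e | Sqsub w e c} else 1

/-- `c` is left-good w.r.t. `P` if `P` is accurate enough between `ν_w(c)` and `c`. -/
def LeftGood (w : List α) (P : ℕ → ℕ) (c : ℕ) : Prop := AccEnough w P (nu w c) c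

/-- `c` is right-good w.r.t. `P` if `P` is accurate enough between `c` and `c + ρ_w(c)`. -/
def RightGood (w : List α) (P : ℕ → ℕ) (c : ℕ) : Prop := AccEnough w P c (c + rho w c)


section Aux

variable {w : List α}

lemma palAt_len_le {c r : ℕ} (h : PalAt w c r) : r ≤ w.length := by
  have := h.2.1; omega

lemma palAt_zero {c : ℕ} (h : c ≤ w.length) : PalAt w c 0 :=
  ⟨Nat.zero_le _, by omega, fun k h1 h2 => absurd (h1.trans h2) (by omega)⟩

lemma palAt_rho {c : ℕ} (h : c ≤ w.length) : PalAt w c (rho w c) := by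
  have hne : {r | PalAt w c r}.Nonempty := ⟨0, by exact palAt_zero h⟩
  have hbdd : BddAbove {r | PalAt w c r} :=
    ⟨w.length, fun r hr => palAt_len_le (by exact hr)⟩
  exact Nat.sSup_mem hne hbdd

lemma le_rho {c r : ℕ} (h : PalAt w c r) : r ≤ rho w c :=
  le_csSup ⟨w.length, fun r hr => palAt_len_le (by exact hr)⟩ h

lemma add_rho_le {c : ℕ} (h : c ≤ w.length) : c + rho w c ≤ w.length :=
  (palAt_rho h).2.1

/-- Key combinatorial lemma: in a pp-irreducible string, two centers `a < d`
cannot satisfy `ρ(a) ≥ d - a` and `ρ(d) > d - a` (this would produce a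
Z-shape `y yᴿ y` strictly inside the longest proper prefix). -/
lemma no_deep_overlap (hpp : PPIrreducible w) {a d : ℕ}
    (had : a < d) (haw : a ≤ w.length) (hdw : d ≤ w.length)
    (ha : d - a ≤ rho w a) (hd : d - a < rho w d) : False := by
  obtain ⟨ha1, ha2, ha3⟩ := palAt_rho haw
  obtain ⟨hd1, hd2, hd3⟩ := palAt_rho hdw
  set s := d - a with hs
  have hs1 : 1 ≤ s := by omega
  have hsa : s ≤ a := le_trans ha ha1
  have hroom : d + s + 1 ≤ w.length := by omega
  have fa : ∀ k, 1 ≤ k → k ≤ s → w[a - k]? = w[a + k - 1]? :=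
    fun k h1 h2 => ha3 k h1 (le_trans h2 ha)
  have fd : ∀ k, 1 ≤ k → k ≤ s → w[d - k]? = w[d + k - 1]? :=
    fun k h1 h2 => hd3 k h1 (by omega)
  set u := w.dropLast with hu
  have hul : u.length = w.length - 1 := List.length_dropLast
  have hget : ∀ i, i < w.length - 1 → u[i]? = w[i]? := by
    intro i hi; rw [hu, List.getElem?_dropLast, if_pos hi]
  set x := (u.drop (a - s)).take s with hx
  have hxlen : x.length = s := by
    rw [hx, List.length_take, List.length_drop, hul]; omega
  have hxget : ∀ i, i < s → x[i]? = w[a - s + i]? := by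
    intro i hi
    rw [hx, List.getElem?_take, if_pos hi, List.getElem?_drop,
      hget (a - s + i) (by omega)]
  have h1 : (u.drop a).take s = x.reverse := by
    apply List.ext_getElem?
    intro i
    by_cases hi : i < s
    · rw [List.getElem?_take, if_pos hi, List.getElem?_drop, hget (a + i) (by omega)]
      rw [List.getElem?_reverse (by omega : i < x.length), hxlen,
        hxget (s - 1 - i) (by omega)]
      have e : a - s + (s - 1 - i) = a - (i + 1) := by omega
      rw [e]
      have := (fa (i + 1) (by omega) (by omega)).symm
      have e2 : a + (i + 1) - 1 = a + i := by omega
      rwa [e2] at this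
    · rw [List.getElem?_take, if_neg hi,
        List.getElem?_eq_none (by rw [List.length_reverse, hxlen]; omega)]
  have h2 : (u.drop d).take s = x := by
    apply List.ext_getElem?
    intro i
    by_cases hi : i < s
    · rw [List.getElem?_take, if_pos hi, List.getElem?_drop, hget (d + i) (by omega),
        hxget i hi]
      have e1 := fd (i + 1) (by omega) (by omega)
      have e2 := fa (s - i) (by omega) (by omega)
      have k1 : d + (i + 1) - 1 = d + i := by omega
      have k2 : d - (i + 1) = a + (s - i) - 1 := by omega
      have k3 : a - (s - i) = a - s + i := by omega
      rw [k1, k2] at e1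
      rw [k3] at e2
      rw [← e1, ← e2]
    · rw [List.getElem?_take, if_neg hi, List.getElem?_eq_none (by omega)]
  have e1 : u.drop (a - s) = x ++ u.drop a := by
    conv_lhs => rw [← List.take_append_drop s (u.drop (a - s))]
    rw [List.drop_drop]
    have : a - s + s = a := by omega
    rw [this]
  have e2 : u.drop a = x.reverse ++ u.drop d := by
    conv_lhs => rw [← List.take_append_drop s (u.drop a)]
    rw [h1, List.drop_drop]
    have : a + s = d := by omega
    rw [this]
  have e3 : u.drop d = x ++ u.drop (d + s) := by
    conv_lhs => rw [← List.take_append_drop s (u.drop d)]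
    rw [h2, List.drop_drop]
  have hdecomp : u = u.take (a - s) ++ x ++ x.reverse ++ x ++ u.drop (d + s) := by
    conv_lhs => rw [← List.take_append_drop (a - s) u, e1, e2, e3]
    simp [List.append_assoc]
  have hxne : x ≠ [] := by
    intro h0; rw [h0] at hxlen; simp at hxlen; omega
  exact hpp (u.take (a - s) ++ x ++ u.drop (d + s))
    ⟨u.take (a - s), x, u.drop (d + s), hxne, hdecomp, rfl⟩

/-- The set of frontiers of palindrome chains from `c`. -/
def FrSet (w : List α) (c : ℕ) : Set ℕ :=
  {f | ∃ l : List ℕ, l.head? = some c ∧ l.Chain' (Sqsub w) ∧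
      ∃ e, l.getLast? = some e ∧ f = e + rho w e}

lemma maxFrontier_eq (c : ℕ) : maxFrontier w c = sSup (FrSet w c) := rfl

lemma mem_FrSet_of_chain {c : ℕ} {t : List ℕ} (h : List.Chain (Sqsub w) c t) :
    (c :: t).getLast (List.cons_ne_nil c t) +
      rho w ((c :: t).getLast (List.cons_ne_nil c t)) ∈ FrSet w c :=
  ⟨c :: t, rfl, h, (c :: t).getLast (List.cons_ne_nil c t),
    List.getLast?_eq_getLast _, rfl⟩

lemma chain_last_le {c : ℕ} {t : List ℕ} (hc : c ≤ w.length)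
    (h : List.Chain (Sqsub w) c t) :
    (c :: t).getLast (List.cons_ne_nil c t) ≤ w.length := by
  induction t generalizing c with
  | nil => simpa using hc
  | cons b t ih =>
    rw [List.Chain, List.chain_cons] at h
    have hb : b ≤ w.length := by
      have h1 := h.1.2.2.1
      have h2 := add_rho_le hc
      omega
    have := ih hb h.2
    rwa [List.getLast_cons (List.cons_ne_nil b t)]

lemma FrSet_le {c : ℕ} (hc : c ≤ w.length) : ∀ f ∈ FrSet w c, f ≤ w.length := by
  rintro f ⟨l, hhead, hch, e, hlast, rfl⟩
  match l with
  | [] => simp at hhead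
  | c' :: t =>
    have hc' : c = c' := by
      have : c' = c := by simpa using hhead
      omega
    subst hc'
    have he : e = (c :: t).getLast (List.cons_ne_nil c t) := by
      rw [List.getLast?_eq_getLast (List.cons_ne_nil c t)] at hlast
      exact (Option.some.inj hlast).symm
    subst he
    have hle := chain_last_le hc hch
    exact add_rho_le hle

lemma FrSet_nonempty (c : ℕ) : (FrSet w c).Nonempty :=
  ⟨c + rho w c, by simpa using mem_FrSet_of_chain (t := []) List.Chain.nil⟩

lemma FrSet_bddAbove {c : ℕ} (hc : c ≤ w.length) : BddAbove (FrSet w c) :=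
  ⟨w.length, fun _ hf => FrSet_le hc _ hf⟩

lemma chain_snoc {R : ℕ → ℕ → Prop} {d : ℕ} : ∀ {c : ℕ} {t : List ℕ},
    List.Chain R c t → R ((c :: t).getLast (List.cons_ne_nil c t)) d →
    List.Chain R c (t ++ [d]) := by
  intro c t
  induction t generalizing c with
  | nil => intro _ hr; exact List.Chain.cons hr List.Chain.nil
  | cons b t ih =>
    intro h hr
    rw [List.Chain, List.chain_cons] at h
    rw [List.getLast_cons (List.cons_ne_nil b t)] at hr
    exact List.Chain.cons h.1 (ih h.2 hr)

lemma exists_straddle {d : ℕ} : ∀ {c : ℕ} {t : List ℕ},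
    List.Chain (Sqsub w) c t → c < d →
    d ≤ (c :: t).getLast (List.cons_ne_nil c t) +
        rho w ((c :: t).getLast (List.cons_ne_nil c t)) →
    ∃ a t', List.Chain (Sqsub w) c t' ∧
      (c :: t').getLast (List.cons_ne_nil c t') = a ∧ a < d ∧ d ≤ a + rho w a := by
  intro c t
  induction t generalizing c with
  | nil =>
    intro _ hcd hfr
    exact ⟨c, [], List.Chain.nil, rfl, hcd, by simpa using hfr⟩
  | cons b t ih =>
    intro h hcd hfr
    rw [List.Chain, List.chain_cons] at h
    rw [List.getLast_cons (List.cons_ne_nil b t)] at hfr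
    by_cases hb : b < d
    · obtain ⟨a, t', h1, h2, h3, h4⟩ := ih h.2 hb hfr
      refine ⟨a, b :: t', List.Chain.cons h.1 h1, ?_, h3, h4⟩
      rwa [List.getLast_cons (List.cons_ne_nil b t')]
    · refine ⟨c, [], List.Chain.nil, rfl, hcd, ?_⟩
      have := h.1.2.2.1
      omega

/-- Step lemma: if `c < d ≤ 𝓕(c)` then `d + ρ(d) ≤ 𝓕(c)`. -/
lemma frontier_step (hpp : PPIrreducible w) {c d : ℕ} (hcw : c ≤ w.length)
    (hdw : d ≤ w.length) (hcd : c < d) (hF : d ≤ maxFrontier w c) :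
    d + rho w d ≤ maxFrontier w c := by
  by_contra hlt
  push_neg at hlt
  have hbdd := FrSet_bddAbove (w := w) hcw
  have hmem : maxFrontier w c ∈ FrSet w c :=
    Nat.sSup_mem (FrSet_nonempty c) hbdd
  obtain ⟨l, hhead, hch, e, hlast, hfe⟩ := hmem
  match l, hhead with
  | c' :: t, hhead =>
    have hc' : c = c' := by
      have : c' = c := by simpa using hhead
      omega
    subst hc'
    have he : e = (c :: t).getLast (List.cons_ne_nil c t) := by
      rw [List.getLast?_eq_getLast (List.cons_ne_nil c t)] at hlast
      exact (Option.some.inj hlast).symm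
    obtain ⟨a, t', h1, h2, h3, h4⟩ :=
      exists_straddle (d := d) hch hcd (by rw [← he, ← hfe]; exact hF)
    have haw : a ≤ w.length := h2 ▸ chain_last_le hcw h1
    have haF : a + rho w a ≤ maxFrontier w c := by
      have := mem_FrSet_of_chain h1
      rw [h2] at this
      exact le_csSup hbdd this
    by_cases hrd : rho w d ≤ d - a
    · have hsq : Sqsub w a d := ⟨h3, by omega, h4, by omega⟩
      have hchain : List.Chain (Sqsub w) c (t' ++ [d]) :=
        chain_snoc h1 (h2 ▸ hsq)
      have hmem2 := mem_FrSet_of_chain hchain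
      have hlast2 : ((c :: (t' ++ [d])).getLast (List.cons_ne_nil _ _)) = d :=
        List.getLast_concat (l := c :: t')
      rw [hlast2] at hmem2
      have hled : d + rho w d ≤ maxFrontier w c := le_csSup hbdd hmem2
      omega
    · exact no_deep_overlap hpp h3 haw hdw (by omega) (by omega)

end Aux

/-- in a pp-irreducible string, if `c < d ≤ 𝓕_w(c)` then
`𝓕_w(c) ≥ 𝓕_w(d)`. -/
theorem maxFrontier_mono (w : List α) (hpp : PPIrreducible w) (c d : ℕ)
    (hc : 1 ≤ c) (hcd : c < d) (hd : d ≤ w.length) (h : d ≤ maxFrontier w c) :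
    maxFrontier w d ≤ maxFrontier w c := by
  have hcw : c ≤ w.length := by omega
  have hkey : ∀ (t : List ℕ) (e : ℕ), List.Chain (Sqsub w) e t → c < e →
      e ≤ maxFrontier w c → e ≤ w.length →
      (e :: t).getLast (List.cons_ne_nil e t) +
        rho w ((e :: t).getLast (List.cons_ne_nil e t)) ≤ maxFrontier w c := by
    intro t
    induction t with
    | nil =>
      intro e _ h1 h2 h3
      simpa using frontier_step hpp hcw h3 h1 h2
    | cons b t ih =>
      intro e h h1 h2 h3
      rw [List.Chain, List.chain_cons] at h
      have hb2 : b ≤ e + rho w e := h.1.2.2.1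
      have hstar := frontier_step hpp hcw h3 h1 h2
      have hbw : b ≤ w.length := le_trans hb2 (add_rho_le h3)
      have := ih b h.2 (lt_trans h1 h.1.1) (le_trans hb2 hstar) hbw
      rwa [List.getLast_cons (List.cons_ne_nil b t)]
  rw [maxFrontier_eq d]
  apply csSup_le (FrSet_nonempty d)
  rintro f ⟨l, hhead, hch, e, hlast, rfl⟩
  match l, hhead with
  | d' :: t, hhead =>
    have hd' : d = d' := by
      have : d' = d := by simpa using hhead
      omega
    subst hd'
    have he : e = (d :: t).getLast (List.cons_ne_nil d t) := by
      rw [List.getLast?_eq_getLast (List.cons_ne_nil d t)] at hlast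
      exact (Option.some.inj hlast).symm
    subst he
    exact hkey t d hch hcd h hd
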